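/- Let G be a single unicast index coding problem on [N] whose interference graph admits an a:b coloring for positive integers a, b. Then, over any finite alphabet A with |A| ≥ 2, there exists a valid index code for G with message length M = b, codelength ℓ = a, and locality r = 1 (each receiver queries exactly b codeword symbols). In particular, broadcast rate a/b is achievable with locality 1. -/

import Mathlib

/-- A valid (possibly non-linear) index code for the single unicast index coding problem
with side information sets `K`, over alphabet `A`, with message length `M`, codelength `ℓ`
and query sets `R`. -/
def IsValidCode {N : ℕ} (K : Fin N → Finset (Fin N)) (A : Type) (M ℓ : ℕ)
    (R : Fin N → Finset (Fin ℓ)) : Prop :=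
  ∃ E : (Fin N → Fin M → A) → (Fin ℓ → A),
    ∀ i : Fin N,
      ∃ D : ({k : Fin ℓ // k ∈ R i} → A) → ({j : Fin N // j ∈ K i} → Fin M → A) → (Fin M → A),
        ∀ x : Fin N → Fin M → A,
          D (fun k => E x k.1) (fun j => x j.1) = x i

/-- If the interference graph of `G` admits an `a:b` coloring, then over
any finite alphabet `A` with `|A| ≥ 2` there is a valid index code for `G` with message
length `b`, codelength `a`, and locality `1`: each receiver queries exactly `b` codeword
symbols. In particular broadcast rate `a/b` is achievable with locality `1`. -/
theorem fractional_coloring_achievability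
    {N a b : ℕ} (ha : 0 < a) (hb : 0 < b)
    (K : Fin N → Finset (Fin N)) (hK : ∀ i, i ∉ K i)
    (A : Type) [Fintype A] (hA : 2 ≤ Fintype.card A)
    (C : Fin N → Finset (Fin a)) (hC : ∀ i, (C i).card = b)
    (hdisj : ∀ i j : Fin N, i ≠ j → (i ∉ K j ∨ j ∉ K i) → Disjoint (C i) (C j)) :
    ∃ R : Fin N → Finset (Fin a),
      IsValidCode K A b a R ∧ ∀ i, (R i).card = b := by
  set c := Fintype.card A with hc
  haveI : NeZero c := ⟨by omega⟩
  have e : A ≃ ZMod c := Fintype.equivOfCardEq (by simp [ZMod.card, hc])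
  -- index of symbol k within C i
  let idx : ∀ (i : Fin N) (k : Fin a), k ∈ C i → Fin b :=
    fun i k hk => ((C i).orderIsoOfFin (hC i)).symm ⟨k, hk⟩
  refine ⟨C, ?_, hC⟩
  refine ⟨fun x k => e.symm (∑ i : Fin N, if h : k ∈ C i then e (x i (idx i k h)) else 0), ?_⟩
  intro i
  refine ⟨fun y s m =>
    e.symm (e (y ⟨(((C i).orderIsoOfFin (hC i)) m).1, (((C i).orderIsoOfFin (hC i)) m).2⟩) -
      ∑ j : Fin N, if hj : j ∈ K i then
        (if h : (((C i).orderIsoOfFin (hC i)) m).1 ∈ C j then e (s ⟨j, hj⟩ (idx j _ h)) else 0)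
      else 0), ?_⟩
  intro x
  funext m
  set k : Fin a := (((C i).orderIsoOfFin (hC i)) m).1 with hkdef
  have hki : k ∈ C i := (((C i).orderIsoOfFin (hC i)) m).2
  simp only [Equiv.apply_symm_apply]
  -- main computation
  have key : (∑ j : Fin N, if h : k ∈ C j then e (x j (idx j k h)) else 0) -
      (∑ j : Fin N, if hj : j ∈ K i then
        (if h : k ∈ C j then e (x j (idx j k h)) else 0) else 0) = e (x i m) := by
    have hsplit : ∀ j : Fin N, j ≠ i →
        (if h : k ∈ C j then e (x j (idx j k h)) else 0) =
        (if hj : j ∈ K i then (if h : k ∈ C j then e (x j (idx j k h)) else 0) else 0) := by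
      intro j hji
      by_cases hj : j ∈ K i
      · simp [hj]
      · have hkj : k ∉ C j := by
          intro hkj
          have := hdisj i j (Ne.symm hji) (Or.inr hj)
          exact (Finset.disjoint_left.mp this hki) hkj
        simp [hj, hkj]
    rw [Finset.sum_eq_add_sum_sdiff_singleton_of_mem (Finset.mem_univ i)
        (fun j => if h : k ∈ C j then e (x j (idx j k h)) else 0),
      Finset.sum_eq_add_sum_sdiff_singleton_of_mem (Finset.mem_univ i)
        (fun j => if hj : j ∈ K i then (if h : k ∈ C j then e (x j (idx j k h)) else 0) else 0)]
    have h1 : (if h : k ∈ C i then e (x i (idx i k h)) else 0) = e (x i m) := by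
      rw [dif_pos hki]
      congr 1
      have : idx i k hki = m := by
        have : (⟨k, hki⟩ : {y // y ∈ C i}) = ((C i).orderIsoOfFin (hC i)) m := Subtype.ext rfl
        simp only [idx, this, OrderIso.symm_apply_apply]
      rw [this]
    have h3 : ∑ j ∈ Finset.univ \ {i}, (if h : k ∈ C j then e (x j (idx j k h)) else 0) =
        ∑ j ∈ Finset.univ \ {i},
          (if hj : j ∈ K i then (if h : k ∈ C j then e (x j (idx j k h)) else 0) else 0) := by
      apply Finset.sum_congr rfl
      intro j hjmem
      have : j ≠ i := by
        simp only [Finset.mem_sdiff, Finset.mem_singleton] at hjmem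
        exact hjmem.2
      exact hsplit j this
    rw [h1, h3, dif_neg (hK i)]
    ring
  rw [key, Equiv.symm_apply_apply]
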